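/- Let x : ℕ → ℝ be a sequence with 0 < x n < 1 for all n, and suppose Σ_{n=0}^∞ x n converges. Then the M-value M(x) := (1 + Σ_{n=0}^∞ x n) · ∏_{n=0}^∞ (1 - x n) - 1 satisfies the strict inequalities -1 < M(x) < 0. -/

import Mathlib

/-- If `0 < x n < 1` for all `n` and `∑ x n` converges, then
`M(x) := (1 + ∑' x n) · ∏' (1 - x n) - 1` satisfies `-1 < M(x) < 0`. -/
theorem stmt_3 (x : ℕ → ℝ) (hx : ∀ n, 0 < x n ∧ x n < 1) (hsum : Summable x) :
    -1 < (1 + ∑' n, x n) * (∏' n, (1 - x n)) - 1 ∧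
    (1 + ∑' n, x n) * (∏' n, (1 - x n)) - 1 < 0 := by
  have hx0 : ∀ n, 0 < 1 - x n := fun n => by linarith [(hx n).2]
  have hS : 0 < ∑' n, x n :=
    Summable.tsum_pos hsum (fun n => (hx n).1.le) 0 (hx 0).1
  -- summability of logs
  have hlog_sum : Summable (fun n => Real.log (1 - x n)) := by
    have hev : ∀ᶠ n in Filter.atTop, ‖Real.log (1 - x n)‖ ≤ 2 * x n := by
      have h2 : ∀ᶠ n in Filter.atTop, x n < 1/2 :=
        hsum.tendsto_atTop_zero.eventually_lt_const (by norm_num)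
      filter_upwards [h2] with n hn
      have h1 : Real.log (1 - x n) ≤ 0 :=
        Real.log_nonpos (hx0 n).le (by linarith [(hx n).1])
      rw [Real.norm_eq_abs, abs_of_nonpos h1]
      have h3 : 1 - (1 - x n)⁻¹ ≤ Real.log (1 - x n) :=
        Real.one_sub_inv_le_log_of_pos (hx0 n)
      have h4 : (1 - x n)⁻¹ ≤ 2 := by
        rw [inv_le_comm₀ (hx0 n) (by norm_num)]
        linarith
      have h5 : (1 - x n) * (1 - x n)⁻¹ = 1 := mul_inv_cancel₀ (hx0 n).ne'
      nlinarith [(hx n).1]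
    rw [← Nat.cofinite_eq_atTop] at hev
    exact Summable.of_norm_bounded_eventually (hsum.mul_left 2) hev
  have hP : HasProd (fun n => 1 - x n) (Real.exp (∑' n, Real.log (1 - x n))) := by
    have := hlog_sum.hasSum.rexp
    refine this.congr_fun fun n => ?_
    exact (Real.exp_log (hx0 n)).symm
  have hPval : (∏' n, (1 - x n)) = Real.exp (∑' n, Real.log (1 - x n)) := hP.tprod_eq
  have hPpos : 0 < ∏' n, (1 - x n) := hPval ▸ Real.exp_pos _
  constructor
  · have : 0 < (1 + ∑' n, x n) * ∏' n, (1 - x n) :=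
      mul_pos (by linarith) hPpos
    linarith
  · have hLle : (∑' n, Real.log (1 - x n)) ≤ ∑' n, (-(x n)) := by
      refine Summable.tsum_le_tsum (fun n => ?_) hlog_sum hsum.neg
      have := Real.log_le_sub_one_of_pos (hx0 n)
      linarith
    have hPle : (∏' n, (1 - x n)) ≤ Real.exp (-(∑' n, x n)) := by
      rw [hPval, tsum_neg] at *
      exact Real.exp_le_exp.2 hLle
    have hkey : (1 + ∑' n, x n) * Real.exp (-(∑' n, x n)) < 1 := by
      have h := Real.add_one_lt_exp (ne_of_gt hS)
      have hmul : Real.exp (-(∑' n, x n)) * Real.exp (∑' n, x n) = 1 := by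
        rw [← Real.exp_add]; simp
      nlinarith [mul_pos (sub_pos.2 h) (Real.exp_pos (-(∑' n, x n)))]
    have : (1 + ∑' n, x n) * ∏' n, (1 - x n) ≤
        (1 + ∑' n, x n) * Real.exp (-(∑' n, x n)) :=
      mul_le_mul_of_nonneg_left hPle (by linarith)
    linarith
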